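/- Let f be differentiable and strongly convex with modulus C₃ > 0 on a convex set X, with minimizer x* ∈ X, and suppose ‖∇f(x)‖ ≤ C₂ for all x ∈ X. Then for any z ∈ X and step size γ with 0 ≤ C₃γ ≤ 1, the projected gradient step x = proj_X(z − γ∇f(z)) satisfies ‖x − x*‖² ≤ (1 − C₃γ)‖z − x*‖² + C₂²γ². -/

import Mathlib

lemma aux_proj_contract {E : Type*} [NormedAddCommGroup E] [InnerProductSpace ℝ E]
    (v p w : E) (h : inner ℝ (v - p) (w - p) ≤ (0:ℝ)) : ‖p - w‖ ^ 2 ≤ ‖v - w‖ ^ 2 := by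
  have hpw : p - w = (v - w) - (v - p) := by abel
  have e1 : ‖p - w‖ ^ 2 = ‖v - w‖ ^ 2 - 2 * inner ℝ (v - w) (v - p) + ‖v - p‖ ^ 2 := by
    rw [hpw, norm_sub_sq_real]
  have e2 : (inner ℝ (v - p) (w - p) : ℝ) = - inner ℝ (v - w) (v - p) + ‖v - p‖ ^ 2 := by
    have : w - p = -(v - w) + (v - p) := by abel
    rw [this, inner_add_right, inner_neg_right, real_inner_comm,
      real_inner_self_eq_norm_sq]
  nlinarith [sq_nonneg ‖v - p‖]

theorem stmt10 (n : ℕ) (X : Set (EuclideanSpace ℝ (Fin n)))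
    (hne : X.Nonempty) (hcl : IsClosed X) (hconv : Convex ℝ X)
    (f : EuclideanSpace ℝ (Fin n) → ℝ) (hdiff : Differentiable ℝ f)
    (C₂ C₃ : ℝ) (hC₂ : 0 < C₂) (hC₃ : 0 < C₃)
    (hsc : ∀ x ∈ X, ∀ y ∈ X,
      inner ℝ (gradient f x) (y - x) ≤ f y - f x - (C₃ / 2) * ‖y - x‖ ^ 2)
    (hgrad : ∀ x ∈ X, ‖gradient f x‖ ≤ C₂)
    (xstar : EuclideanSpace ℝ (Fin n)) (hxstar : xstar ∈ X)
    (hmin : ∀ y ∈ X, f xstar ≤ f y)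
    (proj : EuclideanSpace ℝ (Fin n) → EuclideanSpace ℝ (Fin n))
    (hmem : ∀ v, proj v ∈ X)
    (hminproj : ∀ v, ∀ w ∈ X, ‖proj v - v‖ ≤ ‖w - v‖)
    (γ : ℝ) (hγ0 : 0 ≤ C₃ * γ) (hγ1 : C₃ * γ ≤ 1)
    (z : EuclideanSpace ℝ (Fin n)) (hz : z ∈ X) :
    ‖proj (z - γ • gradient f z) - xstar‖ ^ 2 ≤
      (1 - C₃ * γ) * ‖z - xstar‖ ^ 2 + C₂ ^ 2 * γ ^ 2 := by
  have hγ : 0 ≤ γ := by nlinarith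
  set g := gradient f z with hg
  set v := z - γ • g with hv
  set p := proj v with hp
  -- the projection achieves the infimum of distance
  have hinf : ‖v - p‖ = ⨅ w : X, ‖v - w‖ := by
    haveI : Nonempty X := ⟨⟨p, hmem v⟩⟩
    refine le_antisymm (le_ciInf fun w => ?_) ?_
    · simpa [norm_sub_rev] using hminproj v w w.2
    · exact ciInf_le ⟨0, by rintro x ⟨w, rfl⟩; exact norm_nonneg _⟩ (⟨p, hmem v⟩ : X)
  have hvi : (inner ℝ (v - p) (xstar - p) : ℝ) ≤ 0 :=
    (norm_eq_iInf_iff_real_inner_le_zero hconv (hmem v)).mp hinf xstar hxstar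
  have hcontract : ‖p - xstar‖ ^ 2 ≤ ‖v - xstar‖ ^ 2 := aux_proj_contract v p xstar hvi
  -- expand ‖v - xstar‖²
  have hvx : v - xstar = (z - xstar) - γ • g := by rw [hv]; abel
  have e1 : ‖v - xstar‖ ^ 2
      = ‖z - xstar‖ ^ 2 - 2 * γ * inner ℝ (z - xstar) g + γ ^ 2 * ‖g‖ ^ 2 := by
    rw [hvx, norm_sub_sq_real, real_inner_smul_right, norm_smul, Real.norm_eq_abs,
      mul_pow, sq_abs]
    ring
  -- strong convexity + minimality
  have hsc' := hsc z hz xstar hxstar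
  have hmin' := hmin z hz
  have hinner : (inner ℝ g (xstar - z) : ℝ) ≤ -(C₃ / 2) * ‖xstar - z‖ ^ 2 := by
    linarith
  have hflip : (inner ℝ (z - xstar) g : ℝ) = - inner ℝ g (xstar - z) := by
    rw [real_inner_comm]
    have : z - xstar = -(xstar - z) := by abel
    rw [this, inner_neg_right]
  have hnormflip : ‖xstar - z‖ = ‖z - xstar‖ := norm_sub_rev _ _
  have hgb : ‖g‖ ≤ C₂ := hgrad z hz
  have hgnn : (0:ℝ) ≤ ‖g‖ := norm_nonneg _
  have hgsq : ‖g‖ ^ 2 ≤ C₂ ^ 2 := by nlinarith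
  have hg2 : γ ^ 2 * ‖g‖ ^ 2 ≤ C₂ ^ 2 * γ ^ 2 := by
    have := mul_le_mul_of_nonneg_left hgsq (sq_nonneg γ)
    linarith
  calc ‖p - xstar‖ ^ 2 ≤ ‖v - xstar‖ ^ 2 := hcontract
    _ = ‖z - xstar‖ ^ 2 - 2 * γ * inner ℝ (z - xstar) g + γ ^ 2 * ‖g‖ ^ 2 := e1
    _ ≤ (1 - C₃ * γ) * ‖z - xstar‖ ^ 2 + C₂ ^ 2 * γ ^ 2 := by
        rw [hflip]
        have h2 : γ * inner ℝ g (xstar - z) ≤ γ * (-(C₃ / 2) * ‖xstar - z‖ ^ 2) :=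
          mul_le_mul_of_nonneg_left hinner hγ
        rw [hnormflip] at h2
        nlinarith [h2, hg2]
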